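/- Let 𝒳 ⊆ ℝ^p be nonempty compact, f : ℝ^p → ℝ^n continuous, and 𝒴 = f(𝒳). Let (x_i)_{i≥1} be i.i.d. random variables with common law P_𝒳 satisfying P_𝒳(𝒳) = 1 and the boundary-positivity condition: for every y ∈ ∂𝒴 and every r > 0, P_𝒳({x ∈ 𝒳 : f(x) lies in the open ball of center y and radius r}) > 0. Let ε̄ ≥ 0 and let G¹, G² ⊆ ℝ^n be open sets such that ∂𝒴 ∩ (G¹ ⊕ closedBall(0, ε̄)) ≠ ∅ and ∂𝒴 ∩ (G² ⊕ closedBall(0, ε̄)) ≠ ∅, and set y_i = f(x_i). Then, with probability one, there exist infinitely many M ∈ ℕ such that y_{2M+1} ∈ G¹ ⊕ closedBall(0, ε̄) and y_{2M+2} ∈ G² ⊕ closedBall(0, ε̄). -/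

import Mathlib

open MeasureTheory ProbabilityTheory Metric Filter Pointwise

/-- **Infinitely-often sampling near two boundary-intersecting open sets** (step C2.1).
If `G¹ ⊕ closedBall 0 ε̄` and `G² ⊕ closedBall 0 ε̄` both meet the frontier of the
reachable set, then with probability one there are infinitely many `M` with
`y_{2M+1} ∈ G¹ ⊕ closedBall 0 ε̄` and `y_{2M+2} ∈ G² ⊕ closedBall 0 ε̄`. -/
theorem infinitely_often_paired_samples {p n : ℕ}
    (𝒳 : Set (EuclideanSpace ℝ (Fin p))) (h𝒳ne : 𝒳.Nonempty) (h𝒳c : IsCompact 𝒳)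
    (f : EuclideanSpace ℝ (Fin p) → EuclideanSpace ℝ (Fin n)) (hf : Continuous f)
    {Ω : Type*} [MeasureSpace Ω] [IsProbabilityMeasure (ℙ : Measure Ω)]
    (x : ℕ → Ω → EuclideanSpace ℝ (Fin p)) (hxmeas : ∀ i, Measurable (x i))
    (P𝒳 : Measure (EuclideanSpace ℝ (Fin p))) [IsProbabilityMeasure P𝒳]
    (hlaw : ∀ i, Measure.map (x i) ℙ = P𝒳)
    (hindep : iIndepFun x ℙ)
    (hsupp : P𝒳 𝒳 = 1)
    (hbd : ∀ y ∈ frontier (f '' 𝒳), ∀ r > 0,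
      0 < P𝒳 {x' ∈ 𝒳 | f x' ∈ Metric.ball y r})
    (εbar : ℝ) (hεbar : 0 ≤ εbar)
    (G₁ G₂ : Set (EuclideanSpace ℝ (Fin n))) (hG₁ : IsOpen G₁) (hG₂ : IsOpen G₂)
    (hG₁ne : (frontier (f '' 𝒳) ∩
      (G₁ + Metric.closedBall (0 : EuclideanSpace ℝ (Fin n)) εbar)).Nonempty)
    (hG₂ne : (frontier (f '' 𝒳) ∩
      (G₂ + Metric.closedBall (0 : EuclideanSpace ℝ (Fin n)) εbar)).Nonempty) :
    ∀ᵐ ω ∂ℙ, ∀ N : ℕ, ∃ M ≥ N,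
      f (x (2 * M + 1) ω) ∈ G₁ + Metric.closedBall (0 : EuclideanSpace ℝ (Fin n)) εbar ∧
      f (x (2 * M + 2) ω) ∈ G₂ + Metric.closedBall (0 : EuclideanSpace ℝ (Fin n)) εbar := by
  classical
  set T₁ : Set (EuclideanSpace ℝ (Fin n)) :=
    G₁ + Metric.closedBall (0 : EuclideanSpace ℝ (Fin n)) εbar with hT₁def
  set T₂ : Set (EuclideanSpace ℝ (Fin n)) :=
    G₂ + Metric.closedBall (0 : EuclideanSpace ℝ (Fin n)) εbar with hT₂def
  have hT₁o : IsOpen T₁ := hG₁.add_right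
  have hT₂o : IsOpen T₂ := hG₂.add_right
  -- positivity of the hitting probabilities
  have key : ∀ (T : Set (EuclideanSpace ℝ (Fin n))), IsOpen T →
      (frontier (f '' 𝒳) ∩ T).Nonempty → 0 < P𝒳 (f ⁻¹' T) := by
    rintro T hTo ⟨y, hyf, hyT⟩
    obtain ⟨r, hr, hball⟩ := Metric.isOpen_iff.1 hTo y hyT
    refine lt_of_lt_of_le (hbd y hyf r hr) (measure_mono ?_)
    rintro x' ⟨-, hx'⟩
    exact hball hx'
  have hc₁ : 0 < P𝒳 (f ⁻¹' T₁) := key T₁ hT₁o hG₁ne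
  have hc₂ : 0 < P𝒳 (f ⁻¹' T₂) := key T₂ hT₂o hG₂ne
  -- the target sets
  set B : ℕ → Set (EuclideanSpace ℝ (Fin p)) :=
    fun i => if i % 2 = 1 then f ⁻¹' T₁ else f ⁻¹' T₂ with hBdef
  have hBmeas : ∀ i, MeasurableSet (B i) := by
    intro i
    by_cases h : i % 2 = 1 <;>
      simp only [hBdef, h, if_true, if_false, reduceIte] <;>
      exact (by first
        | exact hT₁o.measurableSet.preimage hf.measurable
        | exact hT₂o.measurableSet.preimage hf.measurable)
  set s : ℕ → Set Ω := fun i => x i ⁻¹' B i with hsdef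
  have hsmeas : ∀ i, MeasurableSet (s i) := fun i => (hBmeas i).preimage (hxmeas i)
  have hsP : ∀ i, ℙ (s i) = P𝒳 (B i) := fun i => by
    rw [hsdef, ← hlaw i, Measure.map_apply (hxmeas i) (hBmeas i)]
  -- the events
  set A : ℕ → Set Ω := fun M => s (2 * M + 1) ∩ s (2 * M + 2) with hAdef
  have hAmeas : ∀ M, MeasurableSet (A M) := fun M =>
    (hsmeas _).inter (hsmeas _)
  have hB₁ : ∀ M, B (2 * M + 1) = f ⁻¹' T₁ := by
    intro M; simp only [hBdef]; rw [if_pos (by omega)]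
  have hB₂ : ∀ M, B (2 * M + 2) = f ⁻¹' T₂ := by
    intro M; simp only [hBdef]; rw [if_neg (by omega)]
  have hAP : ∀ M, ℙ (A M) = P𝒳 (f ⁻¹' T₁) * P𝒳 (f ⁻¹' T₂) := by
    intro M
    have hne : (2 * M + 1) ≠ (2 * M + 2) := by omega
    have hind := (hindep.indepFun hne).measure_inter_preimage_eq_mul
      (B (2 * M + 1)) (B (2 * M + 2)) (hBmeas _) (hBmeas _)
    calc ℙ (A M) = ℙ (s (2 * M + 1)) * ℙ (s (2 * M + 2)) := hind
      _ = P𝒳 (f ⁻¹' T₁) * P𝒳 (f ⁻¹' T₂) := by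
          rw [hsP, hsP, hB₁, hB₂]
  -- independence of the events
  have hiI : iIndep (fun i => MeasurableSpace.comap (x i) inferInstance) ℙ :=
    (iIndepFun_iff_iIndep _ _ _).1 hindep
  have hAindep : iIndepSet A ℙ := by
    rw [iIndepSet_iff_meas_biInter hAmeas]
    intro S
    have hdisj : (S : Set ℕ).PairwiseDisjoint
        (fun M => ({2 * M + 1, 2 * M + 2} : Finset ℕ)) := by
      intro a _ b _ hab
      simp only [Finset.disjoint_left, Finset.mem_insert, Finset.mem_singleton]
      omega
    have hScomap : ∀ i ∈ S.biUnion (fun M => ({2 * M + 1, 2 * M + 2} : Finset ℕ)),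
        MeasurableSet[MeasurableSpace.comap (x i) inferInstance] (s i) :=
      fun i _ => ⟨B i, hBmeas i, rfl⟩
    have hmeasbi := hiI.meas_biInter
      (S := S.biUnion (fun M => ({2 * M + 1, 2 * M + 2} : Finset ℕ))) hScomap
    have hinter : (⋂ i ∈ S.biUnion (fun M => ({2 * M + 1, 2 * M + 2} : Finset ℕ)), s i)
        = ⋂ M ∈ S, A M := by
      rw [Finset.set_biInter_biUnion]
      refine Set.iInter₂_congr fun M _ => ?_
      simp [hAdef, Set.inter_comm]
    have hprod : (∏ i ∈ S.biUnion (fun M => ({2 * M + 1, 2 * M + 2} : Finset ℕ)), ℙ (s i))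
        = ∏ M ∈ S, ℙ (A M) := by
      rw [Finset.prod_biUnion hdisj]
      refine Finset.prod_congr rfl fun M _ => ?_
      rw [Finset.prod_insert (by simp only [Finset.mem_singleton]; omega),
        Finset.prod_singleton, hAP M, hsP, hsP, hB₁, hB₂]
    rw [← hinter, ← hprod]
    exact hmeasbi
  -- divergence of the series
  have htop : (∑' M, ℙ (A M)) = ⊤ := by
    have : ∀ M, ℙ (A M) = P𝒳 (f ⁻¹' T₁) * P𝒳 (f ⁻¹' T₂) := hAP
    rw [tsum_congr this]
    exact ENNReal.tsum_const_eq_top_of_ne_zero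
      (mul_ne_zero hc₁.ne' hc₂.ne')
  -- second Borel–Cantelli
  have hone : ℙ (limsup A atTop) = 1 :=
    measure_limsup_eq_one hAmeas hAindep htop
  have hlim : ∀ᵐ ω ∂ℙ, ω ∈ limsup A atTop := by
    rw [ae_iff]
    have : {ω | ¬ ω ∈ limsup A atTop} = (limsup A atTop)ᶜ := rfl
    rw [this, measure_compl (MeasurableSet.measurableSet_limsup hAmeas) (measure_ne_top _ _),
      hone, measure_univ, tsub_self]
  filter_upwards [hlim] with ω hω N
  rw [Filter.mem_limsup_iff_frequently_mem, frequently_atTop] at hω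
  obtain ⟨M, hMN, hM⟩ := hω N
  refine ⟨M, hMN, ?_, ?_⟩
  · have := hM.1
    simp only [hsdef, Set.mem_preimage, hB₁ M] at this
    exact this
  · have := hM.2
    simp only [hsdef, Set.mem_preimage, hB₂ M] at this
    exact this
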